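/- Let α ∈ F_{q^{mn}} with F_q(α) = F_{q^{mn}}. Then the F_q-span of {α^{in} : 0 ≤ i ≤ m-1} is an m-dimensional α-splitting subspace of F_{q^{mn}}. In particular, an m-dimensional α-splitting subspace exists. -/

import Mathlib

open Polynomial

lemma aux_main (F : Type*) [Field F] (m n : ℕ) (hm : 0 < m) (hn : 0 < n)
    (K : Type*) [Field K] [Algebra F K] [FiniteDimensional F K]
    (hK : Module.finrank F K = m * n)
    (α : K) (hα : Algebra.adjoin F {α} = ⊤) :
    Module.finrank F
        (Submodule.span F (Set.range fun i : Fin m => α ^ ((i : ℕ) * n))) = m ∧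
      DirectSum.IsInternal (fun i : Fin n =>
        (Submodule.span F (Set.range fun i : Fin m => α ^ ((i : ℕ) * n))).map
          (LinearMap.mulLeft F (α ^ (i : ℕ)))) := by
  classical
  have hint : IsIntegral F α := Algebra.IsIntegral.isIntegral α
  set e : Algebra.adjoin F {α} ≃ₐ[F] K :=
    (Subalgebra.equivOfEq _ _ hα).trans Subalgebra.topEquiv with he
  set pb : PowerBasis F K := (Algebra.adjoin.powerBasis hint).map e with hpb
  have hgen : pb.gen = α := by
    simp [hpb, he, PowerBasis.map_gen, Algebra.adjoin.powerBasis_gen]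
  have hdim : pb.dim = m * n := by rw [← pb.finrank, hK]
  -- the power basis as a family indexed by Fin (m*n)
  set v : Fin (m * n) → K := fun k => α ^ (k : ℕ) with hv
  have hB : ∀ k : Fin (m * n), pb.basis (Fin.cast hdim.symm k) = v k := by
    intro k
    rw [PowerBasis.coe_basis, hgen]
    rfl
  have hli : LinearIndependent F v := by
    have := pb.basis.linearIndependent.comp (Fin.cast hdim.symm)
      (fun a b hab => by simpa [Fin.ext_iff] using hab)
    convert this using 1
    funext k
    exact (hB k).symm
    rfl
  have hspan : Submodule.span F (Set.range v) = ⊤ := by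
    have h1 : Set.range v = Set.range (pb.basis ∘ Fin.cast hdim.symm) := by
      ext x
      constructor
      · rintro ⟨k, rfl⟩; exact ⟨k, hB k⟩
      · rintro ⟨k, rfl⟩; exact ⟨k, (hB k).symm⟩
    rw [h1, Set.range_comp, Set.range_eq_univ.mpr
      (fun b => ⟨Fin.cast hdim b, rfl⟩), Set.image_univ, pb.basis.span_eq]
  -- the index map
  have hidx : ∀ (i : Fin m) (j : Fin n), (i : ℕ) * n + (j : ℕ) < m * n := by
    intro i j
    calc (i : ℕ) * n + (j : ℕ) < (i : ℕ) * n + n := by omega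
    _ = ((i : ℕ) + 1) * n := by ring
    _ ≤ m * n := Nat.mul_le_mul_right n i.2
  set idx : Fin m → Fin n → Fin (m * n) := fun i j => ⟨(i : ℕ) * n + (j : ℕ), hidx i j⟩
    with hidxdef
  set S : Fin n → Set (Fin (m * n)) := fun j => Set.range (fun i : Fin m => idx i j) with hS
  -- each mapped submodule is the span of a block of the basis
  set W : Submodule F K := Submodule.span F (Set.range fun i : Fin m => α ^ ((i : ℕ) * n))
    with hW
  have hWj : ∀ j : Fin n, W.map (LinearMap.mulLeft F (α ^ (j : ℕ)))
      = Submodule.span F (v '' S j) := by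
    intro j
    rw [hW, Submodule.map_span]
    congr 1
    ext x
    constructor
    · rintro ⟨y, ⟨i, rfl⟩, rfl⟩
      exact ⟨idx i j, ⟨i, rfl⟩, by simp [hv, idx, LinearMap.mulLeft_apply, pow_add, mul_comm]⟩
    · rintro ⟨k, ⟨i, rfl⟩, rfl⟩
      exact ⟨α ^ ((i : ℕ) * n), ⟨i, rfl⟩,
        by simp [hv, idx, LinearMap.mulLeft_apply, pow_add, mul_comm]⟩
  -- blocks are disjoint index sets
  have hSdisj : ∀ j j' : Fin n, j ≠ j' → Disjoint (S j) (S j') := by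
    intro j j' hjj'
    rw [Set.disjoint_left]
    rintro x ⟨i, rfl⟩ ⟨i', hx⟩
    apply hjj'
    have : (i' : ℕ) * n + (j' : ℕ) = (i : ℕ) * n + (j : ℕ) := by
      simpa [idx, Fin.ext_iff] using hx
    have h1 : ((i' : ℕ) * n + (j' : ℕ)) % n = (j' : ℕ) := by
      rw [Nat.add_comm, Nat.add_mul_mod_self_right, Nat.mod_eq_of_lt j'.2]
    have h2 : ((i : ℕ) * n + (j : ℕ)) % n = (j : ℕ) := by
      rw [Nat.add_comm, Nat.add_mul_mod_self_right, Nat.mod_eq_of_lt j.2]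
    exact Fin.ext (by rw [← h2, ← this, h1])
  constructor
  · -- finrank = m
    have hg : Function.Injective (fun i : Fin m => idx i ⟨0, hn⟩) := by
      intro a b hab
      have : (a : ℕ) * n + 0 = (b : ℕ) * n + 0 := by simpa [idx, Fin.ext_iff] using hab
      exact Fin.ext (Nat.eq_of_mul_eq_mul_right hn (by omega))
    have hli' : LinearIndependent F (fun i : Fin m => α ^ ((i : ℕ) * n)) := by
      have := hli.comp (fun i : Fin m => idx i ⟨0, hn⟩) hg
      convert this using 1
      rfl
    rw [finrank_span_eq_card hli', Fintype.card_fin]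
  · -- internal direct sum
    apply DirectSum.isInternal_submodule_of_iSupIndep_of_iSup_eq_top
    · -- independence
      intro j
      have hle : (⨆ (k) (_ : k ≠ j), W.map (LinearMap.mulLeft F (α ^ (k : ℕ))))
          ≤ Submodule.span F (v '' ⋃ (k) (_ : k ≠ j), S k) := by
        refine iSup₂_le fun k hk => ?_
        rw [hWj k]
        exact Submodule.span_mono (Set.image_mono
          (Set.subset_iUnion₂ (s := fun k _ => S k) k hk))
      refine Disjoint.mono (hWj j).le hle (hli.disjoint_span_image ?_)
      rw [Set.disjoint_iff_forall_ne]
      rintro x hx y hy rfl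
      obtain ⟨k, hk, hy'⟩ := Set.mem_iUnion₂.mp hy
      exact (Set.disjoint_left.mp (hSdisj j k (Ne.symm hk)) hx) hy'
    · -- supremum is everything
      rw [eq_top_iff, ← hspan, Submodule.span_le]
      rintro x ⟨k, rfl⟩
      have hkn : (k : ℕ) % n < n := Nat.mod_lt _ hn
      have hkd : (k : ℕ) / n < m := Nat.div_lt_of_lt_mul (by simpa [mul_comm] using k.2)
      have hx : v k ∈ W.map (LinearMap.mulLeft F (α ^ ((⟨(k : ℕ) % n, hkn⟩ : Fin n) : ℕ))) := by
        refine Submodule.mem_map.mpr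
          ⟨α ^ (((k : ℕ) / n) * n), Submodule.subset_span ⟨⟨(k : ℕ) / n, hkd⟩, rfl⟩, ?_⟩
        show α ^ ((k : ℕ) % n) * α ^ (((k : ℕ) / n) * n) = α ^ (k : ℕ)
        rw [← pow_add]
        congr 1
        exact Nat.mod_add_div' _ _
      exact Submodule.mem_iSup_of_mem _ hx

theorem stmt_14 (F : Type*) [Field F] [Fintype F]
    (m n : ℕ) (hm : 0 < m) (hn : 0 < n)
    (K : Type*) [Field K] [Algebra F K] [FiniteDimensional F K]
    (hK : Module.finrank F K = m * n)
    (α : K) (hα : Algebra.adjoin F {α} = ⊤) :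
    (Module.finrank F
        (Submodule.span F (Set.range fun i : Fin m => α ^ ((i : ℕ) * n))) = m ∧
      DirectSum.IsInternal (fun i : Fin n =>
        (Submodule.span F (Set.range fun i : Fin m => α ^ ((i : ℕ) * n))).map
          (LinearMap.mulLeft F (α ^ (i : ℕ))))) ∧
    ∃ W : Submodule F K, Module.finrank F W = m ∧
      DirectSum.IsInternal (fun i : Fin n =>
        W.map (LinearMap.mulLeft F (α ^ (i : ℕ)))) := by
  obtain ⟨h1, h2⟩ := aux_main F m n hm hn K hK α hα
  exact ⟨⟨h1, h2⟩, _, h1, h2⟩
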